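/- arXiv:2311.04486 — 2 statements merged into one kernel-verified Lean document; each statement's English description precedes it below -/
import Mathlib

section
/- Let $G$ be a finite group, $F = F(G)$ its Fitting subgroup, and let $x \in G$ have prime order $p$ such that $N_G(\langle x \rangle) F$ is a Frobenius group with Frobenius kernel $F$ and complement $N_G(\langle x \rangle)$. Then the natural map $\theta : N_G(\langle x \rangle) \to N_{G/F}(\langle xF \rangle)$, $g \mapsto gF$, is surjective, and $\theta(C_G(x)) = C_{G/F}(xF)$. In particular $N_G(\langle x \rangle)/C_G(x) \cong N_{G/F}(\langle xF \rangle)/C_{G/F}(xF)$. -/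
open scoped commutatorElement in
/-- The iterated Engel commutator: `engel x y 0 = x`, `engel x y (n+1) = ⁅engel x y n, y⁆`. -/
def engel {G : Type*} [Group G] (x y : G) : ℕ → G
  | 0 => x
  | n + 1 => ⁅engel x y n, y⁆

theorem stmt8 {G : Type*} [Group G] [Finite G] (F : Subgroup G) [F.Normal]
    (hFnil : Group.IsNilpotent F)
    (hFmax : ∀ K : Subgroup G, K.Normal → Group.IsNilpotent K → K ≤ F)
    (x : G) (p : ℕ) (hp : p.Prime) (hx : orderOf x = p)
    (hdisj : Subgroup.normalizer (Subgroup.zpowers x : Set G) ⊓ F = ⊥)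
    (hfrob : ∀ l ∈ Subgroup.normalizer (Subgroup.zpowers x : Set G), l ≠ 1 →
      ∀ f ∈ F, Commute l f → f = 1) :
    Subgroup.map (QuotientGroup.mk' F) (Subgroup.normalizer (Subgroup.zpowers x : Set G))
        = Subgroup.normalizer (Subgroup.zpowers ((QuotientGroup.mk' F) x) : Set (G ⧸ F)) ∧
      Subgroup.map (QuotientGroup.mk' F) (Subgroup.centralizer {x})
        = Subgroup.centralizer {(QuotientGroup.mk' F) x} := by
  classical
  have hFn : F.Normal := inferInstance
  set π := QuotientGroup.mk' F with hπdef
  have hx1 : x ≠ 1 := by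
    intro h
    rw [h, orderOf_one] at hx
    exact hp.one_lt.ne' hx.symm
  have hxN : x ∈ Subgroup.normalizer (Subgroup.zpowers x : Set G) :=
    Subgroup.le_normalizer (Subgroup.mem_zpowers x)
  have hπker : ∀ a : G, π a = 1 ↔ a ∈ F := fun a => QuotientGroup.eq_one_iff a
  -- key Frobenius conjugacy lemma
  have key : ∀ n ∈ Subgroup.normalizer (Subgroup.zpowers x : Set G), n ≠ 1 →
      ∀ f ∈ F, ∃ e ∈ F, e * (n * f) * e⁻¹ = n := by
    intro n hn hn1 f hf
    set φ : F → F := fun e => ⟨n⁻¹ * (e : G)⁻¹ * n * (e : G), by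
      have h1 : n⁻¹ * (e : G)⁻¹ * n ∈ F := by
        have := hFn.conj_mem (e : G)⁻¹ (inv_mem e.2) n⁻¹
        simpa [mul_assoc] using this
      exact mul_mem h1 e.2⟩ with hφdef
    have hinj : Function.Injective φ := by
      intro e e' heq
      have heq' : n⁻¹ * (e : G)⁻¹ * n * (e : G) = n⁻¹ * (e' : G)⁻¹ * n * (e' : G) :=
        congrArg Subtype.val heq
      have hc : Commute n ((e' : G) * (e : G)⁻¹) := by
        have h2 : (e : G)⁻¹ * n * (e : G) = (e' : G)⁻¹ * n * (e' : G) := by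
          calc (e : G)⁻¹ * n * (e : G) = n * (n⁻¹ * (e : G)⁻¹ * n * (e : G)) := by group
          _ = n * (n⁻¹ * (e' : G)⁻¹ * n * (e' : G)) := by rw [heq']
          _ = (e' : G)⁻¹ * n * (e' : G) := by group
        show n * ((e' : G) * (e : G)⁻¹) = ((e' : G) * (e : G)⁻¹) * n
        calc n * ((e' : G) * (e : G)⁻¹)
            = (e' : G) * ((e' : G)⁻¹ * n * (e' : G)) * (e : G)⁻¹ := by group
          _ = (e' : G) * ((e : G)⁻¹ * n * (e : G)) * (e : G)⁻¹ := by rw [h2]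
          _ = ((e' : G) * (e : G)⁻¹) * n := by group
      have := hfrob n hn hn1 ((e' : G) * (e : G)⁻¹) (mul_mem e'.2 (inv_mem e.2)) hc
      have : (e' : G) = (e : G) := by
        have h3 := mul_eq_one_iff_eq_inv.mp this
        simpa using h3
      exact Subtype.ext this.symm
    have hsurj : Function.Surjective φ := Finite.injective_iff_surjective.mp hinj
    obtain ⟨e, he⟩ := hsurj ⟨f, hf⟩
    have he' : n⁻¹ * (e : G)⁻¹ * n * (e : G) = f := congrArg Subtype.val he
    refine ⟨(e : G), e.2, ?_⟩
    calc (e : G) * (n * f) * (e : G)⁻¹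
        = (e : G) * (n * (n⁻¹ * (e : G)⁻¹ * n * (e : G))) * (e : G)⁻¹ := by rw [he']
      _ = n := by group
  -- the lifting lemma
  have lift : ∀ g : G, π g ∈ Subgroup.normalizer (Subgroup.zpowers (π x) : Set (G ⧸ F)) →
      ∃ h : G, h ∈ Subgroup.normalizer (Subgroup.zpowers x : Set G) ∧ π h = π g ∧
        ∃ k : ℤ, h * x * h⁻¹ = x ^ k := by
    intro g hg
    have hmem : π g * π x * (π g)⁻¹ ∈ Subgroup.zpowers (π x) :=
      (Subgroup.mem_normalizer_iff.mp hg (π x)).mp (Subgroup.mem_zpowers _)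
    obtain ⟨k, hk⟩ := Subgroup.mem_zpowers_iff.mp hmem
    set u : G := x ^ k with hudef
    set f : G := u⁻¹ * (g * x * g⁻¹) with hfdef
    have huf : u * f = g * x * g⁻¹ := by rw [hfdef]; group
    have hfF : f ∈ F := by
      have h1 : π f = 1 := by
        have : π u = π g * π x * (π g)⁻¹ := by
          rw [hudef, map_zpow, hk]
        rw [hfdef, map_mul, map_mul, map_mul, map_inv, map_inv, this]
        group
      exact (hπker f).mp h1
    have hu1 : u ≠ 1 := by
      intro h
      have hxf : x ∈ F := by
        have : g * x * g⁻¹ ∈ F := by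
          rw [← huf, h, one_mul]; exact hfF
        have := hFn.conj_mem _ this g⁻¹
        simpa [mul_assoc] using this
      have : x ∈ Subgroup.normalizer (Subgroup.zpowers x : Set G) ⊓ F := ⟨hxN, hxf⟩
      rw [hdisj, Subgroup.mem_bot] at this
      exact hx1 this
    have huN : u ∈ Subgroup.normalizer (Subgroup.zpowers x : Set G) :=
      Subgroup.le_normalizer (Subgroup.mem_zpowers_iff.mpr ⟨k, rfl⟩)
    obtain ⟨e, heF, hee⟩ := key u huN hu1 f hfF
    refine ⟨e * g, ?_, ?_, k, ?_⟩
    · -- normalizer membership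
      have hconj : (e * g) * x * (e * g)⁻¹ = u := by
        rw [mul_inv_rev]
        calc e * g * x * (g⁻¹ * e⁻¹) = e * (g * x * g⁻¹) * e⁻¹ := by group
          _ = e * (u * f) * e⁻¹ := by rw [huf]
          _ = u := hee
      -- x ∈ zpowers u since gcd(k, p) = 1
      have hknd : ¬ ((p : ℤ) ∣ k) := by
        intro hd
        rw [← hx] at hd
        exact hu1 (orderOf_dvd_iff_zpow_eq_one.mp hd)
      have hcop : IsCoprime (p : ℤ) k :=
        (Prime.coprime_iff_not_dvd (Nat.prime_iff_prime_int.mp hp)).mpr hknd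
      obtain ⟨a, b, hab⟩ := hcop
      have hxu : x = u ^ b := by
        have hxp : x ^ (p : ℤ) = 1 := by
          rw [zpow_natCast, ← hx, pow_orderOf_eq_one]
        calc x = x ^ (a * (p : ℤ) + b * k) := by rw [hab, zpow_one]
          _ = (x ^ (p : ℤ)) ^ a * (x ^ k) ^ b := by
              rw [zpow_add, mul_comm a, mul_comm b, zpow_mul, zpow_mul]
          _ = u ^ b := by rw [hxp, one_zpow, one_mul, hudef]
      have hinvconj : (e * g)⁻¹ * x * (e * g) = x ^ b := by
        have h1 : (e * g)⁻¹ * u * (e * g) = x := by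
          rw [← hconj]; group
        calc (e * g)⁻¹ * x * (e * g) = (e * g)⁻¹ * u ^ b * (e * g) := by rw [← hxu]
          _ = ((e * g)⁻¹ * u * ((e * g)⁻¹)⁻¹) ^ b := by rw [conj_zpow]; group
          _ = x ^ b := by rw [inv_inv, h1]
      rw [Subgroup.mem_normalizer_iff]
      intro c
      constructor
      · intro hcm
        obtain ⟨m, rfl⟩ := Subgroup.mem_zpowers_iff.mp hcm
        refine Subgroup.mem_zpowers_iff.mpr ⟨k * m, ?_⟩
        calc x ^ (k * m) = (x ^ k) ^ m := by rw [zpow_mul]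
          _ = ((e * g) * x * (e * g)⁻¹) ^ m := by rw [hconj]
          _ = (e * g) * x ^ m * (e * g)⁻¹ := by rw [conj_zpow]
      · intro hcm
        obtain ⟨m, hm⟩ := Subgroup.mem_zpowers_iff.mp hcm
        refine Subgroup.mem_zpowers_iff.mpr ⟨b * m, ?_⟩
        calc x ^ (b * m) = (x ^ b) ^ m := by rw [zpow_mul]
          _ = ((e * g)⁻¹ * x * (e * g)) ^ m := by rw [hinvconj]
          _ = (e * g)⁻¹ * x ^ m * (e * g) := by
              rw [show (e * g)⁻¹ * x * (e * g) = (e * g)⁻¹ * x * ((e * g)⁻¹)⁻¹ by rw [inv_inv],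
                conj_zpow, inv_inv]
          _ = (e * g)⁻¹ * ((e * g) * c * (e * g)⁻¹) * (e * g) := by rw [hm]
          _ = c := by group
    · rw [map_mul, (hπker e).mpr heF, one_mul]
    · rw [mul_inv_rev]
      calc e * g * x * (g⁻¹ * e⁻¹) = e * (g * x * g⁻¹) * e⁻¹ := by group
        _ = e * (u * f) * e⁻¹ := by rw [huf]
        _ = u := hee
  constructor
  · -- normalizer statement
    apply le_antisymm
    · rintro _ ⟨n, hn, rfl⟩
      rw [Subgroup.mem_normalizer_iff]
      intro c
      rw [← MonoidHom.map_zpowers]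
      constructor
      · rintro ⟨d, hd, rfl⟩
        exact ⟨n * d * n⁻¹, (Subgroup.mem_normalizer_iff.mp hn d).mp hd, by
          simp [map_mul, map_inv]⟩
      · rintro ⟨d, hd, hd2⟩
        have hn' : n⁻¹ ∈ Subgroup.normalizer (Subgroup.zpowers x : Set G) := inv_mem hn
        refine ⟨n⁻¹ * d * n, ?_, ?_⟩
        · have := (Subgroup.mem_normalizer_iff.mp hn' d).mp hd
          simpa using this
        · have : π (n⁻¹ * d * n) = (π n)⁻¹ * (π n * c * (π n)⁻¹) * π n := by
            rw [map_mul, map_mul, map_inv, hd2]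
          rw [this]; group
    · intro c hc
      obtain ⟨g, rfl⟩ := QuotientGroup.mk'_surjective F c
      obtain ⟨h, hhN, hhπ, _⟩ := lift g hc
      exact ⟨h, hhN, hhπ⟩
  · -- centralizer statement
    apply le_antisymm
    · rintro _ ⟨c, hc, rfl⟩
      rw [Subgroup.mem_centralizer_iff]
      rintro m hm
      rw [Set.mem_singleton_iff] at hm
      rw [hm]
      have := Subgroup.mem_centralizer_iff.mp hc x (Set.mem_singleton x)
      rw [← map_mul, this, map_mul]
    · intro c hc
      obtain ⟨g, rfl⟩ := QuotientGroup.mk'_surjective F c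
      have hcomm : π x * π g = π g * π x :=
        Subgroup.mem_centralizer_iff.mp hc (π x) (Set.mem_singleton _)
      have hgN : π g ∈ Subgroup.normalizer (Subgroup.zpowers (π x) : Set (G ⧸ F)) := by
        rw [Subgroup.mem_normalizer_iff]
        intro b
        constructor
        · intro hbm
          obtain ⟨m, rfl⟩ := Subgroup.mem_zpowers_iff.mp hbm
          refine Subgroup.mem_zpowers_iff.mpr ⟨m, ?_⟩
          have h1 : π g * (π x) ^ m = (π x) ^ m * π g := (Commute.zpow_right hcomm.symm m)
          rw [h1]; group
        · intro hbm
          obtain ⟨m, hm⟩ := Subgroup.mem_zpowers_iff.mp hbm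
          refine Subgroup.mem_zpowers_iff.mpr ⟨m, ?_⟩
          have h1 : π g * (π x) ^ m = (π x) ^ m * π g := (Commute.zpow_right hcomm.symm m)
          have h2 : b = (π g)⁻¹ * (π x) ^ m * π g := by rw [hm]; group
          have h3 : (π g)⁻¹ * (π x) ^ m * π g = (π x) ^ m := by
            rw [mul_assoc, ← h1]; group
          rw [h2, h3]
      obtain ⟨h, hhN, hhπ, k, hk⟩ := lift g hgN
      have hxk : x ^ k = x := by
        have h1 : π (x ^ k * x⁻¹) = 1 := by
          have h2 : π (x ^ k) = π h * π x * (π h)⁻¹ := by rw [← hk]; simp [map_mul, map_inv]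
          have h3 : π h * π x * (π h)⁻¹ = π x := by
            rw [hhπ, ← hcomm]; group
          rw [map_mul, map_inv, h2, h3]
          group
        have h4 : x ^ k * x⁻¹ ∈ F := (hπker _).mp h1
        have h5 : x ^ k * x⁻¹ ∈ Subgroup.normalizer (Subgroup.zpowers x : Set G) :=
          Subgroup.le_normalizer (mul_mem (Subgroup.mem_zpowers_iff.mpr ⟨k, rfl⟩)
            (inv_mem (Subgroup.mem_zpowers x)))
        have : x ^ k * x⁻¹ ∈ Subgroup.normalizer (Subgroup.zpowers x : Set G) ⊓ F := ⟨h5, h4⟩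
        rw [hdisj, Subgroup.mem_bot] at this
        exact mul_inv_eq_one.mp this
      have hhc : h ∈ Subgroup.centralizer {x} := by
        rw [Subgroup.mem_centralizer_iff]
        rintro m hm
        rw [Set.mem_singleton_iff] at hm
        rw [hm]
        have hfix : h * x * h⁻¹ = x := by rw [hk, hxk]
        calc x * h = (h * x * h⁻¹) * h := by rw [hfix]
          _ = h * x := by group
      exact ⟨h, hhc, hhπ⟩
end

section
/- Let $p \equiv 3 \pmod{4}$ be prime, let $n \in \{p, p+1\}$ with $n \ge 5$, and let $P$ be a Sylow $p$-subgroup of $\mathrm{Alt}(n)$. Then $P$ is generated by a single $p$-cycle, $|N_{\mathrm{Alt}(n)}(P)| = p(p-1)(n-p)!/2$, $C_{\mathrm{Alt}(n)}(P) = P$ when $n \le p+1$, and $|N_{\mathrm{Alt}(n)}(P) : C_{\mathrm{Alt}(n)}(P)| = (p-1)/2$ is odd. -/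
open Equiv Equiv.Perm Subgroup

/-- Centralizer of a cycle with at most one fixed point. -/
lemma cent_lemma {m : Type*} [Fintype m] [DecidableEq m] {c τ : Equiv.Perm m} {p : ℕ}
    (hc : c.IsCycle) (hcard : c.support.card = p)
    (hsmall : Fintype.card m ≤ p + 1) (hcomm : Commute c τ) :
    τ ∈ Subgroup.zpowers c := by
  obtain ⟨a, ha, hspan⟩ := hc
  have key : ∀ b, c (τ b) = τ (c b) := by
    intro b
    have := congrArg (fun σ : Equiv.Perm m => σ b) hcomm
    simpa [Equiv.Perm.mul_apply] using this
  have hτa : c (τ a) ≠ τ a := by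
    rw [key]; exact fun h => ha (τ.injective h)
  obtain ⟨k, hk⟩ := hspan hτa
  refine ⟨k, ?_⟩
  ext b
  by_cases hb : c b = b
  · have h1 : (c ^ k) b = b := Equiv.Perm.zpow_apply_eq_self_of_apply_eq_self hb k
    have h2 : c (τ b) = τ b := by rw [key, hb]
    have hcompl : (c.supportᶜ : Finset m).card ≤ 1 := by
      rw [Finset.card_compl, hcard]; omega
    have hb1 : b ∈ c.supportᶜ := by simp [Equiv.Perm.mem_support, hb]
    have hb2 : τ b ∈ c.supportᶜ := by simp [Equiv.Perm.mem_support, h2]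
    rw [h1, Finset.card_le_one.mp hcompl _ hb2 _ hb1]
  · obtain ⟨j, hj⟩ := hspan hb
    have hcj : Commute (c ^ j) τ := hcomm.zpow_left j
    have h3 : (c ^ j) (τ a) = τ ((c ^ j) a) := by
      have := congrArg (fun σ : Equiv.Perm m => σ a) hcj
      simpa [Equiv.Perm.mul_apply] using this
    calc (c ^ k) b = (c ^ k) ((c ^ j) a) := by rw [hj]
      _ = (c ^ j) ((c ^ k) a) := by
          rw [← Equiv.Perm.mul_apply, ← Equiv.Perm.mul_apply, zpow_mul_comm]
      _ = (c ^ j) (τ a) := by rw [hk]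
      _ = τ ((c ^ j) a) := h3
      _ = τ b := by rw [hj]

lemma count_orderp {G : Type*} [Group G] [Fintype G] {p : ℕ} [hp : Fact p.Prime]
    (hfact : (Nat.card G).factorization p = 1) :
    Nat.card {g : G // orderOf g = p} = Nat.card (Sylow p G) * (p - 1) := by
  classical
  haveI := Fintype.ofFinite (Sylow p G)
  have hcardSyl : ∀ Q : Sylow p G, Nat.card Q = p := fun Q => by
    rw [Sylow.card_eq_multiplicity, hfact, pow_one]
  set A : Finset G := Finset.univ.filter (fun g => orderOf g = p) with hA
  let f : G → Sylow p G := fun g =>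
    if h : orderOf g = p then Sylow.ofCard (Subgroup.zpowers g)
      (by rw [Nat.card_zpowers, h, hfact, pow_one]) else Classical.arbitrary _
  have hcount : A.card = ∑ Q : Sylow p G, (A.filter (fun g => f g = Q)).card :=
    Finset.card_eq_sum_card_fiberwise (fun g _ => Finset.mem_univ _)
  have hfiber : ∀ Q : Sylow p G, (A.filter (fun g => f g = Q)) =
      (Finset.univ.filter (fun g => g ∈ (Q : Subgroup G))).erase 1 := by
    intro Q
    ext g
    simp only [hA, Finset.mem_filter, Finset.mem_erase, Finset.mem_univ, true_and]
    constructor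
    · rintro ⟨hg, hfg⟩
      have hfg' : f g = Sylow.ofCard (Subgroup.zpowers g)
          (by rw [Nat.card_zpowers, hg, hfact, pow_one]) := dif_pos hg
      have hzp : (Subgroup.zpowers g : Subgroup G) = (Q : Subgroup G) := by
        rw [← Sylow.coe_ofCard (Subgroup.zpowers g)
          (by rw [Nat.card_zpowers, hg, hfact, pow_one]), ← hfg', hfg]
      refine ⟨fun h1 => ?_, ?_⟩
      · rw [h1, orderOf_one] at hg; exact hp.out.ne_one hg.symm
      · rw [← hzp]; exact Subgroup.mem_zpowers g
    · rintro ⟨hg1, hgQ⟩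
      have hord : orderOf g = p := by
        have hdvd : orderOf (⟨g, hgQ⟩ : (Q : Subgroup G)) ∣ Nat.card (Q : Subgroup G) :=
          orderOf_dvd_natCard _
        rw [Subgroup.orderOf_mk, hcardSyl Q] at hdvd
        rcases (Nat.Prime.eq_one_or_self_of_dvd hp.out _ hdvd) with h | h
        · exact absurd (orderOf_eq_one_iff.mp h) hg1
        · exact h
      refine ⟨hord, ?_⟩
      have hle : Subgroup.zpowers g ≤ (Q : Subgroup G) := Subgroup.zpowers_le.mpr hgQ
      have hcards : Nat.card (Q : Subgroup G) ≤ Nat.card (Subgroup.zpowers g) := by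
        rw [Nat.card_zpowers, hord, hcardSyl Q]
      have : (Subgroup.zpowers g : Subgroup G) = (Q : Subgroup G) :=
        Subgroup.eq_of_le_of_card_ge hle hcards
      have hfg' : f g = Sylow.ofCard (Subgroup.zpowers g)
          (by rw [Nat.card_zpowers, hord, hfact, pow_one]) := dif_pos hord
      rw [hfg']
      exact Sylow.ext (by rw [Sylow.coe_ofCard]; exact this)
  have hfibercard : ∀ Q : Sylow p G, (A.filter (fun g => f g = Q)).card = p - 1 := by
    intro Q
    rw [hfiber Q, Finset.card_erase_of_mem (by simp [Subgroup.one_mem]),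
      ← Fintype.card_subtype]
    rw [← Nat.card_eq_fintype_card]
    rw [show Nat.card {g : G // g ∈ (Q : Subgroup G)} = Nat.card (Q : Subgroup G) from rfl,
      hcardSyl Q]
  rw [Nat.card_eq_fintype_card, Fintype.card_subtype, ← hA, hcount]
  simp only [hfibercard]
  rw [Finset.sum_const, Finset.card_univ, smul_eq_mul, Nat.card_eq_fintype_card]

theorem stmt10 (p n : ℕ) (hp : p.Prime) (hmod : p % 4 = 3)
    (hn : n = p ∨ n = p + 1) (h5 : 5 ≤ n)
    (P : Sylow p (alternatingGroup (Fin n))) :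
    (∃ x : alternatingGroup (Fin n), (x : Equiv.Perm (Fin n)).IsCycle ∧
        (x : Equiv.Perm (Fin n)).support.card = p ∧
        (P : Subgroup (alternatingGroup (Fin n))) = Subgroup.zpowers x) ∧
      Nat.card (Subgroup.normalizer ((P : Subgroup (alternatingGroup (Fin n))) : Set (alternatingGroup (Fin n))))
        = p * (p - 1) * (n - p).factorial / 2 ∧
      Subgroup.centralizer ((P : Subgroup (alternatingGroup (Fin n))) : Set _)
        = (P : Subgroup (alternatingGroup (Fin n))) ∧
      (Subgroup.centralizer ((P : Subgroup (alternatingGroup (Fin n))) : Set _)).relIndex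
          (Subgroup.normalizer ((P : Subgroup (alternatingGroup (Fin n))) : Set (alternatingGroup (Fin n)))) = (p - 1) / 2 ∧
      Odd ((p - 1) / 2) := by
  haveI : Fact p.Prime := ⟨hp⟩
  have hp2' := hp.two_le
  have hpodd : p % 2 = 1 := by omega
  have hp5 : 4 ≤ p := by
    rcases hn with rfl | rfl
    · omega
    · omega
  have hnp1 : p ≤ n := by omega
  have hnp2 : n ≤ p + 1 := by rcases hn with rfl | rfl <;> omega
  haveI : Nontrivial (Fin n) := ⟨⟨0, by omega⟩, ⟨1, by omega⟩, by simp [Fin.ext_iff]⟩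
  have hcardPerm : Fintype.card (Equiv.Perm (Fin n)) = n.factorial := by
    rw [Fintype.card_perm, Fintype.card_fin]
  have h2G : 2 * Nat.card (alternatingGroup (Fin n)) = n.factorial := by
    rw [Nat.card_eq_fintype_card, two_mul_card_alternatingGroup, hcardPerm]
  -- p^2 does not divide n!
  have hpf : ¬ p ∣ (p - 1).factorial := by
    intro h
    have := (Nat.Prime.dvd_factorial hp).mp h
    omega
  have hfacsplit : p.factorial = p * (p - 1).factorial := by
    conv_lhs => rw [show p = (p - 1) + 1 by omega]
    rw [Nat.factorial_succ]
    congr 1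
    omega
  have hp2A : ¬ (p * p ∣ p.factorial) := by
    intro h
    rw [hfacsplit] at h
    exact hpf ((Nat.mul_dvd_mul_iff_left (show 0 < p by omega)).mp h)
  have hp2 : ¬ (p * p ∣ n.factorial) := by
    rcases hn with h' | h'
    · rw [h']; exact hp2A
    · rw [h', Nat.factorial_succ]
      intro h
      have hcop : Nat.Coprime (p * p) (p + 1) := by
        have h1 : Nat.Coprime p (p + 1) := by simp
        exact Nat.Coprime.mul h1 h1
      exact hp2A (Nat.Coprime.dvd_of_dvd_mul_left hcop h)
  have hfact : (Nat.card (alternatingGroup (Fin n))).factorization p = 1 := by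
    have hps : p ∣ Nat.card (alternatingGroup (Fin n)) := by
      have h1 : p ∣ n.factorial := Nat.dvd_factorial (by omega) hnp1
      rw [← h2G] at h1
      have hc2 : Nat.Coprime p 2 := by
        rw [Nat.coprime_primes hp Nat.prime_two]
        omega
      exact hc2.dvd_of_dvd_mul_left h1
    have hns : ¬ p ^ 2 ∣ Nat.card (alternatingGroup (Fin n)) := by
      intro h
      apply hp2
      rw [← h2G]
      rw [pow_two] at h
      exact h.mul_left 2
    have h0 : Nat.card (alternatingGroup (Fin n)) ≠ 0 := Nat.card_pos.ne'
    have a1 : 1 ≤ (Nat.card (alternatingGroup (Fin n))).factorization p :=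
      (Nat.Prime.pow_dvd_iff_le_factorization hp h0).mp (by simpa using hps)
    have a2 : ¬ 2 ≤ (Nat.card (alternatingGroup (Fin n))).factorization p := fun h2 =>
      hns ((Nat.Prime.pow_dvd_iff_le_factorization hp h0).mpr h2)
    omega
  have hcardP : Nat.card (P : Subgroup (alternatingGroup (Fin n))) = p := by
    rw [Sylow.card_eq_multiplicity, hfact, pow_one]
  haveI : IsCyclic (P : Subgroup (alternatingGroup (Fin n))) := isCyclic_of_prime_card hcardP
  obtain ⟨g, hg⟩ := IsCyclic.exists_generator (α := (P : Subgroup (alternatingGroup (Fin n))))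
  have hordg : orderOf g = p := by
    rw [orderOf_eq_card_of_forall_mem_zpowers hg, hcardP]
  set x : alternatingGroup (Fin n) := (g : alternatingGroup (Fin n)) with hxdef
  have hordx : orderOf x = p := by rw [← hordg]; exact Subgroup.orderOf_coe g
  have hPzp : (P : Subgroup (alternatingGroup (Fin n))) = Subgroup.zpowers x := by
    refine (Subgroup.eq_of_le_of_card_ge (Subgroup.zpowers_le.mpr g.2) ?_).symm
    rw [hcardP, Nat.card_zpowers, hordx]
  have hordc : orderOf (x : Equiv.Perm (Fin n)) = p := by
    rw [Subgroup.orderOf_coe]; exact hordx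
  have hcyc : (x : Equiv.Perm (Fin n)).IsCycle := by
    apply Equiv.Perm.isCycle_of_prime_order (by rw [hordc]; exact hp)
    rw [hordc]
    calc (x : Equiv.Perm (Fin n)).support.card ≤ Fintype.card (Fin n) :=
          Finset.card_le_univ _
      _ < 2 * p := by rw [Fintype.card_fin]; omega
  have hsupp : (x : Equiv.Perm (Fin n)).support.card = p := by
    rw [← hcyc.orderOf, hordc]
  -- centralizer
  have hcentP : Subgroup.centralizer ((P : Subgroup (alternatingGroup (Fin n))) : Set (alternatingGroup (Fin n))) = (P : Subgroup (alternatingGroup (Fin n))) := by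
    rw [hPzp]
    apply le_antisymm
    · intro y hy
      have hxy : x * y = y * x :=
        (Subgroup.mem_centralizer_iff.mp hy) x (Subgroup.mem_zpowers x)
      have hcomm : Commute (x : Equiv.Perm (Fin n)) (y : Equiv.Perm (Fin n)) := by
        unfold Commute SemiconjBy
        exact_mod_cast congrArg (Subtype.val) hxy
      obtain ⟨k, hk⟩ := cent_lemma hcyc hsupp (by rw [Fintype.card_fin]; omega) hcomm
      refine ⟨k, ?_⟩
      apply Subtype.ext
      push_cast
      exact hk
    · intro y hy
      obtain ⟨k, hk⟩ := hy
      rw [Subgroup.mem_centralizer_iff]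
      rintro z hz
      obtain ⟨j, hj⟩ := hz
      rw [← hk, ← hj, ← zpow_add, ← zpow_add, add_comm]
  -- counting elements of order p
  have hcount1 : Nat.card {y : alternatingGroup (Fin n) // orderOf y = p} = Nat.card (Sylow p (alternatingGroup (Fin n))) * (p - 1) :=
    count_orderp hfact
  have memiff3 : ∀ y : alternatingGroup (Fin n), orderOf y = p →
      ((y : Equiv.Perm (Fin n)).IsCycle ∧ (y : Equiv.Perm (Fin n)).support.card = p) := by
    intro y hy
    have hord : orderOf (y : Equiv.Perm (Fin n)) = p := by
      rw [Subgroup.orderOf_coe]; exact hy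
    have hic : (y : Equiv.Perm (Fin n)).IsCycle := by
      apply Equiv.Perm.isCycle_of_prime_order (by rw [hord]; exact hp)
      rw [hord]
      calc (y : Equiv.Perm (Fin n)).support.card ≤ Fintype.card (Fin n) :=
            Finset.card_le_univ _
        _ < 2 * p := by rw [Fintype.card_fin]; omega
    exact ⟨hic, by rw [← hic.orderOf, hord]⟩
  have memiff : ∀ σ : Equiv.Perm (Fin n),
      σ ∈ MulAction.orbit (ConjAct (Equiv.Perm (Fin n))) (x : Equiv.Perm (Fin n)) ↔
        (σ.IsCycle ∧ σ.support.card = p) := by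
    intro σ
    rw [ConjAct.mem_orbit_conjAct, Equiv.Perm.isConj_iff_cycleType_eq]
    constructor
    · intro h
      have hct : σ.cycleType = {p} := by
        rw [h, hcyc.cycleType, hsupp]
      have hic : σ.IsCycle := Equiv.Perm.card_cycleType_eq_one.mp (by rw [hct]; rfl)
      have hsc : σ.support.card = p := by
        have h2 := hic.cycleType
        rw [hct] at h2
        have : ({p} : Multiset ℕ) = {σ.support.card} := by rw [h2]
        simpa using this.symm
      exact ⟨hic, hsc⟩
    · rintro ⟨hic, hsc⟩
      rw [hic.cycleType, hsc, hcyc.cycleType, hsupp]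
  have memiff2 : ∀ σ : Equiv.Perm (Fin n), σ.IsCycle → σ.support.card = p →
      σ ∈ alternatingGroup (Fin n) ∧ orderOf σ = p := by
    intro σ hic hsc
    refine ⟨?_, by rw [hic.orderOf, hsc]⟩
    rw [Equiv.Perm.mem_alternatingGroup, hic.sign, hsc,
      (Nat.odd_iff.mpr hpodd).neg_one_pow, neg_neg]
  have e1 : {y : alternatingGroup (Fin n) // orderOf y = p} ≃
      (MulAction.orbit (ConjAct (Equiv.Perm (Fin n))) (x : Equiv.Perm (Fin n))) :=
    { toFun := fun y => ⟨(y : alternatingGroup (Fin n)) , (memiff _).mpr (memiff3 _ y.2)⟩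
      invFun := fun σ => ⟨⟨↑σ, (memiff2 _ ((memiff _).mp σ.2).1 ((memiff _).mp σ.2).2).1⟩, by
        rw [Subgroup.orderOf_mk]
        exact (memiff2 _ ((memiff _).mp σ.2).1 ((memiff _).mp σ.2).2).2⟩
      left_inv := fun y => Subtype.ext (Subtype.ext rfl)
      right_inv := fun σ => Subtype.ext rfl }
  have e3 : (MulAction.stabilizer (ConjAct (Equiv.Perm (Fin n))) (x : Equiv.Perm (Fin n))) ≃
      (Subgroup.zpowers (x : Equiv.Perm (Fin n))) :=
    { toFun := fun y => ⟨ConjAct.ofConjAct ↑y, by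
        have hy := y.2
        rw [MulAction.mem_stabilizer_iff, ConjAct.smul_def] at hy
        have hcm : Commute (x : Equiv.Perm (Fin n)) (ConjAct.ofConjAct ↑y) :=
          (mul_inv_eq_iff_eq_mul.mp hy).symm
        exact cent_lemma hcyc hsupp (by rw [Fintype.card_fin]; omega) hcm⟩
      invFun := fun z => ⟨ConjAct.toConjAct (↑z : Equiv.Perm (Fin n)), by
        rw [MulAction.mem_stabilizer_iff, ConjAct.smul_def, ConjAct.ofConjAct_toConjAct]
        obtain ⟨k, hk⟩ := Subgroup.mem_zpowers_iff.mp z.2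
        rw [← hk]
        exact mul_inv_eq_iff_eq_mul.mpr ((Commute.refl (x : Equiv.Perm (Fin n))).zpow_left k).eq⟩
      left_inv := fun y => Subtype.ext rfl
      right_inv := fun z => Subtype.ext rfl }
  have estab : Nat.card
      (MulAction.stabilizer (ConjAct (Equiv.Perm (Fin n))) (x : Equiv.Perm (Fin n))) = p := by
    rw [Nat.card_congr e3, Nat.card_zpowers, hordc]
  have e2orb : Nat.card
        (MulAction.orbit (ConjAct (Equiv.Perm (Fin n))) (x : Equiv.Perm (Fin n))) *
        Nat.card (MulAction.stabilizer (ConjAct (Equiv.Perm (Fin n)))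
          (x : Equiv.Perm (Fin n))) = n.factorial := by
    have h := Nat.card_congr
      (MulAction.orbitProdStabilizerEquivGroup (ConjAct (Equiv.Perm (Fin n)))
        (x : Equiv.Perm (Fin n)))
    rw [Nat.card_prod] at h
    rw [h, Nat.card_congr (ConjAct.ofConjAct (G := Equiv.Perm (Fin n))).toEquiv,
      Nat.card_eq_fintype_card, hcardPerm]
  have horbcard : Nat.card {y : alternatingGroup (Fin n) // orderOf y = p} * p = n.factorial := by
    rw [Nat.card_congr e1, ← estab]
    exact e2orb
  -- normalizer cardinality
  have hidx : Nat.card (Sylow p (alternatingGroup (Fin n))) = (Subgroup.normalizer ((P : Subgroup (alternatingGroup (Fin n))) : Set (alternatingGroup (Fin n)))).index :=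
    P.card_eq_index_normalizer
  have hNI : Nat.card (Subgroup.normalizer ((P : Subgroup (alternatingGroup (Fin n))) : Set (alternatingGroup (Fin n)))) * (Subgroup.normalizer ((P : Subgroup (alternatingGroup (Fin n))) : Set (alternatingGroup (Fin n)))).index
      = Nat.card (alternatingGroup (Fin n)) := Subgroup.card_mul_index _
  have hI0 : (Subgroup.normalizer ((P : Subgroup (alternatingGroup (Fin n))) : Set (alternatingGroup (Fin n)))).index ≠ 0 := Subgroup.index_ne_zero_of_finite
  have key : 2 * Nat.card (Subgroup.normalizer ((P : Subgroup (alternatingGroup (Fin n))) : Set (alternatingGroup (Fin n)))) = (p - 1) * p := by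
    have h1 : (Subgroup.normalizer ((P : Subgroup (alternatingGroup (Fin n))) : Set (alternatingGroup (Fin n)))).index * ((p - 1) * p) =
        (Subgroup.normalizer ((P : Subgroup (alternatingGroup (Fin n))) : Set (alternatingGroup (Fin n)))).index * (2 * Nat.card (Subgroup.normalizer ((P : Subgroup (alternatingGroup (Fin n))) : Set (alternatingGroup (Fin n))))) := by
      calc (Subgroup.normalizer ((P : Subgroup (alternatingGroup (Fin n))) : Set (alternatingGroup (Fin n)))).index * ((p - 1) * p)
          = (Nat.card (Sylow p (alternatingGroup (Fin n))) * (p - 1)) * p := by rw [hidx]; ring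
        _ = Nat.card {y : alternatingGroup (Fin n) // orderOf y = p} * p := by rw [hcount1]
        _ = n.factorial := horbcard
        _ = 2 * Nat.card (alternatingGroup (Fin n)) := h2G.symm
        _ = 2 * (Nat.card (Subgroup.normalizer ((P : Subgroup (alternatingGroup (Fin n))) : Set (alternatingGroup (Fin n)))) * (Subgroup.normalizer ((P : Subgroup (alternatingGroup (Fin n))) : Set (alternatingGroup (Fin n)))).index) := by
            rw [hNI]
        _ = (Subgroup.normalizer ((P : Subgroup (alternatingGroup (Fin n))) : Set (alternatingGroup (Fin n)))).index *
            (2 * Nat.card (Subgroup.normalizer ((P : Subgroup (alternatingGroup (Fin n))) : Set (alternatingGroup (Fin n))))) := by ring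
    exact (Nat.eq_of_mul_eq_mul_left (Nat.pos_of_ne_zero hI0) h1).symm
  have hfacnp : (n - p).factorial = 1 := by
    rcases hn with rfl | rfl <;> simp
  have goal2 : Nat.card (Subgroup.normalizer ((P : Subgroup (alternatingGroup (Fin n))) : Set (alternatingGroup (Fin n)))) = p * (p - 1) * (n - p).factorial / 2 := by
    rw [hfacnp, mul_one, mul_comm p (p - 1), ← key, Nat.mul_div_cancel_left _ (by norm_num)]
  -- relindex
  have hrel : (Subgroup.centralizer ((P : Subgroup (alternatingGroup (Fin n))) : Set (alternatingGroup (Fin n)))).relIndex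
      (Subgroup.normalizer ((P : Subgroup (alternatingGroup (Fin n))) : Set (alternatingGroup (Fin n)))) = (p - 1) / 2 := by
    rw [hcentP]
    have h1 : (P : Subgroup (alternatingGroup (Fin n))).relIndex (Subgroup.normalizer ((P : Subgroup (alternatingGroup (Fin n))) : Set (alternatingGroup (Fin n)))) *
        (Subgroup.normalizer ((P : Subgroup (alternatingGroup (Fin n))) : Set (alternatingGroup (Fin n)))).index = (P : Subgroup (alternatingGroup (Fin n))).index :=
      Subgroup.relIndex_mul_index Subgroup.le_normalizer
    have h2 : Nat.card (P : Subgroup (alternatingGroup (Fin n))) * (P : Subgroup (alternatingGroup (Fin n))).index = Nat.card (alternatingGroup (Fin n)) :=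
      Subgroup.card_mul_index _
    have h4 : (Subgroup.normalizer ((P : Subgroup (alternatingGroup (Fin n))) : Set (alternatingGroup (Fin n)))).index *
        (Nat.card (P : Subgroup (alternatingGroup (Fin n))) *
          ((P : Subgroup (alternatingGroup (Fin n))).relIndex (Subgroup.normalizer ((P : Subgroup (alternatingGroup (Fin n))) : Set (alternatingGroup (Fin n)))))) =
        (Subgroup.normalizer ((P : Subgroup (alternatingGroup (Fin n))) : Set (alternatingGroup (Fin n)))).index * Nat.card (Subgroup.normalizer ((P : Subgroup (alternatingGroup (Fin n))) : Set (alternatingGroup (Fin n)))) := by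
      calc (Subgroup.normalizer ((P : Subgroup (alternatingGroup (Fin n))) : Set (alternatingGroup (Fin n)))).index *
            (Nat.card (P : Subgroup (alternatingGroup (Fin n))) *
              ((P : Subgroup (alternatingGroup (Fin n))).relIndex (Subgroup.normalizer ((P : Subgroup (alternatingGroup (Fin n))) : Set (alternatingGroup (Fin n))))))
          = Nat.card (P : Subgroup (alternatingGroup (Fin n))) *
            ((P : Subgroup (alternatingGroup (Fin n))).relIndex (Subgroup.normalizer ((P : Subgroup (alternatingGroup (Fin n))) : Set (alternatingGroup (Fin n)))) *
              (Subgroup.normalizer ((P : Subgroup (alternatingGroup (Fin n))) : Set (alternatingGroup (Fin n)))).index) := by ring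
        _ = Nat.card (P : Subgroup (alternatingGroup (Fin n))) * (P : Subgroup (alternatingGroup (Fin n))).index := by rw [h1]
        _ = Nat.card (alternatingGroup (Fin n)) := h2
        _ = Nat.card (Subgroup.normalizer ((P : Subgroup (alternatingGroup (Fin n))) : Set (alternatingGroup (Fin n)))) * (Subgroup.normalizer ((P : Subgroup (alternatingGroup (Fin n))) : Set (alternatingGroup (Fin n)))).index :=
            hNI.symm
        _ = (Subgroup.normalizer ((P : Subgroup (alternatingGroup (Fin n))) : Set (alternatingGroup (Fin n)))).index * Nat.card (Subgroup.normalizer ((P : Subgroup (alternatingGroup (Fin n))) : Set (alternatingGroup (Fin n)))) := by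
            ring
    have h5 := Nat.eq_of_mul_eq_mul_left (Nat.pos_of_ne_zero hI0) h4
    rw [hcardP] at h5
    have h6 : (2 * ((P : Subgroup (alternatingGroup (Fin n))).relIndex (Subgroup.normalizer ((P : Subgroup (alternatingGroup (Fin n))) : Set (alternatingGroup (Fin n)))))) * p
        = (p - 1) * p := by
      calc (2 * ((P : Subgroup (alternatingGroup (Fin n))).relIndex (Subgroup.normalizer ((P : Subgroup (alternatingGroup (Fin n))) : Set (alternatingGroup (Fin n)))))) * p
          = 2 * (p * ((P : Subgroup (alternatingGroup (Fin n))).relIndex (Subgroup.normalizer ((P : Subgroup (alternatingGroup (Fin n))) : Set (alternatingGroup (Fin n)))))) := by ring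
        _ = 2 * Nat.card (Subgroup.normalizer ((P : Subgroup (alternatingGroup (Fin n))) : Set (alternatingGroup (Fin n)))) := by rw [h5]
        _ = (p - 1) * p := key
    have h7 := Nat.eq_of_mul_eq_mul_right (show 0 < p by omega) h6
    omega
  exact ⟨⟨x, hcyc, hsupp, hPzp⟩, goal2, hcentP, hrel, Nat.odd_iff.mpr (by omega)⟩
end
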